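/- Let G be a d-regular finite simple undirected graph on n vertices (d ≥ 1), let S be a set of k vertices, and let η solve the McAvoy–Allen system for S. Then Σ_{u,v ∈ V} |N(u) ∩ N(v)| · η(u,v) = d²·n·k·(n−k) − d·n·a(S), where a(S) is the number of active edges induced by S. -/

import Mathlib

open Finset

variable {V : Type*}

/-- Number of active edges: edges with exactly one endpoint in `S`. -/
def activeCount [Fintype V] [DecidableEq V] (G : SimpleGraph V) [DecidableRel G.Adj]
    (S : Finset V) : ℕ :=
  (G.edgeFinset.filter (fun e =>
    Sym2.lift ⟨fun u v => xor (decide (u ∈ S)) (decide (v ∈ S)),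
      fun u v => Bool.xor_comm _ _⟩ e = true)).card

/-- `η` solves the McAvoy–Allen system for `S` on a `d`-regular graph `G`. -/
def MASolves [Fintype V] [DecidableEq V] (G : SimpleGraph V) [DecidableRel G.Adj]
    (d : ℕ) (S : Finset V) (η : V → V → ℝ) : Prop :=
  (∀ u, η u u = 0) ∧
  ∀ u v, u ≠ v →
    η u v = ((Fintype.card V : ℝ) / 2) *
        |(if u ∈ S then (1 : ℝ) else 0) - (if v ∈ S then (1 : ℝ) else 0)|
      + (1 / (2 * (d : ℝ))) *
        ((∑ w ∈ G.neighborFinset u, η w v) + (∑ w ∈ G.neighborFinset v, η u w))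

private lemma sum_neighbor_eq [Fintype V] [DecidableEq V] (G : SimpleGraph V)
    [DecidableRel G.Adj] (u : V) (f : V → ℝ) :
    ∑ w ∈ G.neighborFinset u, f w = ∑ w : V, if G.Adj u w then f w else 0 := by
  rw [← Finset.sum_filter]
  congr 1
  ext w
  simp [SimpleGraph.mem_neighborFinset]

private lemma neighbor_sum_swap [Fintype V] [DecidableEq V] (G : SimpleGraph V)
    [DecidableRel G.Adj] (f : V → V → ℝ) :
    ∑ u : V, ∑ w ∈ G.neighborFinset u, f u w
      = ∑ w : V, ∑ u ∈ G.neighborFinset w, f u w := by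
  simp only [sum_neighbor_eq]
  rw [Finset.sum_comm]
  refine Finset.sum_congr rfl fun w _ => Finset.sum_congr rfl fun u _ => ?_
  exact if_congr (G.adj_comm u w) rfl rfl

private lemma triple_sum [Fintype V] [DecidableEq V] (G : SimpleGraph V)
    [DecidableRel G.Adj] (f : V → V → ℝ) :
    ∑ u : V, ∑ v : V, ((G.neighborFinset u ∩ G.neighborFinset v).card : ℝ) * f u v
      = ∑ w : V, ∑ u ∈ G.neighborFinset w, ∑ v ∈ G.neighborFinset w, f u v := by
  have h1 : ∀ u v : V, ((G.neighborFinset u ∩ G.neighborFinset v).card : ℝ) * f u v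
      = ∑ w : V, if G.Adj u w ∧ G.Adj v w then f u v else 0 := by
    intro u v
    have hset : Finset.univ.filter (fun w => G.Adj u w ∧ G.Adj v w)
        = G.neighborFinset u ∩ G.neighborFinset v := by
      ext w; simp [SimpleGraph.mem_neighborFinset]
    rw [← Finset.sum_filter, hset, Finset.sum_const, nsmul_eq_mul]
  calc ∑ u : V, ∑ v : V, ((G.neighborFinset u ∩ G.neighborFinset v).card : ℝ) * f u v
      = ∑ u : V, ∑ v : V, ∑ w : V, (if G.Adj u w ∧ G.Adj v w then f u v else 0) :=
        Finset.sum_congr rfl fun u _ => Finset.sum_congr rfl fun v _ => h1 u v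
    _ = ∑ u : V, ∑ w : V, ∑ v : V, (if G.Adj u w ∧ G.Adj v w then f u v else 0) :=
        Finset.sum_congr rfl fun u _ => Finset.sum_comm
    _ = ∑ w : V, ∑ u : V, ∑ v : V, (if G.Adj u w ∧ G.Adj v w then f u v else 0) :=
        Finset.sum_comm
    _ = ∑ w : V, ∑ u ∈ G.neighborFinset w, ∑ v ∈ G.neighborFinset w, f u v := by
        refine Finset.sum_congr rfl fun w _ => ?_
        rw [sum_neighbor_eq]
        refine Finset.sum_congr rfl fun u _ => ?_
        by_cases h : G.Adj w u
        · rw [if_pos h, sum_neighbor_eq]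
          refine Finset.sum_congr rfl fun v _ => ?_
          have h1' : G.Adj u w := h.symm
          have hiff : (G.Adj u w ∧ G.Adj v w) ↔ G.Adj w v :=
            ⟨fun h2 => h2.2.symm, fun h2 => ⟨h1', h2.symm⟩⟩
          simp only [hiff]
        · rw [if_neg h]
          exact Finset.sum_eq_zero fun v _ => if_neg fun hc => h hc.1.symm

private def activeGraph [DecidableEq V] (G : SimpleGraph V) (S : Finset V) : SimpleGraph V where
  Adj u v := G.Adj u v ∧ ¬ ((u ∈ S) ↔ (v ∈ S))
  symm := ⟨fun u v h => ⟨h.1.symm, fun hi => h.2 hi.symm⟩⟩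
  loopless := ⟨fun u h => G.loopless.irrefl u h.1⟩

private instance [DecidableEq V] (G : SimpleGraph V) [DecidableRel G.Adj] (S : Finset V) :
    DecidableRel (activeGraph G S).Adj :=
  fun u v => inferInstanceAs (Decidable (G.Adj u v ∧ ¬ ((u ∈ S) ↔ (v ∈ S))))

private lemma activeGraph_adj [DecidableEq V] (G : SimpleGraph V) (S : Finset V) (u v : V) :
    (activeGraph G S).Adj u v ↔ G.Adj u v ∧ ¬ ((u ∈ S) ↔ (v ∈ S)) := Iff.rfl

private lemma activeCount_eq [Fintype V] [DecidableEq V] (G : SimpleGraph V)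
    [DecidableRel G.Adj] (S : Finset V) :
    activeCount G S = (activeGraph G S).edgeFinset.card := by
  apply congrArg Finset.card
  ext e
  induction e using Sym2.ind with
  | _ u v =>
    simp only [Finset.mem_filter, SimpleGraph.mem_edgeFinset, SimpleGraph.mem_edgeSet,
      Sym2.lift_mk, activeGraph_adj]
    by_cases hu : u ∈ S <;> by_cases hv : v ∈ S <;> simp [hu, hv]

private lemma active_double [Fintype V] [DecidableEq V] (G : SimpleGraph V)
    [DecidableRel G.Adj] (S : Finset V) :
    ∑ u : V, ∑ v : V, (if (activeGraph G S).Adj u v then (1:ℝ) else 0)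
      = 2 * (activeCount G S : ℝ) := by
  have h2 := SimpleGraph.two_mul_card_edgeFinset (G := activeGraph G S)
  have hcast : (2 * (activeCount G S : ℝ))
      = ((#(Finset.univ.filter fun (x : V × V) => (activeGraph G S).Adj x.1 x.2) : ℕ) : ℝ) := by
    rw [activeCount_eq G S]
    norm_cast
  rw [hcast, ← Finset.sum_boole]
  exact (Fintype.sum_prod_type
    (fun x : V × V => if (activeGraph G S).Adj x.1 x.2 then (1:ℝ) else 0)).symm

private noncomputable def cfun [Fintype V] [DecidableEq V] (G : SimpleGraph V) [DecidableRel G.Adj]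
    (d : ℕ) (S : Finset V) (η : V → V → ℝ) (u v : V) : ℝ :=
  ((Fintype.card V : ℝ) / 2) *
      |(if u ∈ S then (1 : ℝ) else 0) - (if v ∈ S then (1 : ℝ) else 0)|
    + (1 / (2 * (d : ℝ))) *
      ((∑ w ∈ G.neighborFinset u, η w v) + (∑ w ∈ G.neighborFinset v, η u w))

set_option maxHeartbeats 1000000 in
theorem sum_common_neighbors_eta [Fintype V] [DecidableEq V]
    (G : SimpleGraph V) [DecidableRel G.Adj]
    (d k : ℕ) (hd : 1 ≤ d) (hreg : G.IsRegularOfDegree d)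
    (S : Finset V) (hk : S.card = k) (η : V → V → ℝ) (hη : MASolves G d S η) :
    ∑ u : V, ∑ v : V, ((G.neighborFinset u ∩ G.neighborFinset v).card : ℝ) * η u v
    = (d : ℝ) ^ 2 * (Fintype.card V : ℝ) * (k : ℝ) * ((Fintype.card V : ℝ) - (k : ℝ))
      - (d : ℝ) * (Fintype.card V : ℝ) * (activeCount G S : ℝ) := by
  classical
  obtain ⟨hdiag, hrec⟩ := hη
  have hd0 : (d:ℝ) ≠ 0 := by
    have : 0 < d := hd
    exact_mod_cast this.ne'
  have hcard : ∀ v : V, (G.neighborFinset v).card = d := fun v => hreg v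
  have hrecC : ∀ u v : V, u ≠ v → η u v = cfun G d S η u v := hrec
  set T : ℝ := ∑ u : V, ∑ v : V, ((G.neighborFinset u ∩ G.neighborFinset v).card : ℝ) * η u v
    with hT
  set E : ℝ := ∑ u : V, ∑ v ∈ G.neighborFinset u, η u v with hE
  set Sg : ℝ := ∑ u : V, ∑ v : V, η u v with hSg
  -- sum of indicator over V
  have hxS : ∑ v : V, (if v ∈ S then (1:ℝ) else 0) = (k:ℝ) := by
    rw [Finset.sum_ite_mem, Finset.univ_inter, Finset.sum_const, nsmul_eq_mul, mul_one, hk]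
  -- Q : full double sum of |x u - x v|
  have hQ : ∑ u : V, ∑ v : V,
      |(if u ∈ S then (1:ℝ) else 0) - (if v ∈ S then (1:ℝ) else 0)|
      = 2 * (k:ℝ) * ((Fintype.card V : ℝ) - (k:ℝ)) := by
    have key : ∀ u v : V,
        |(if u ∈ S then (1:ℝ) else 0) - (if v ∈ S then (1:ℝ) else 0)|
        = (if u ∈ S then (1:ℝ) else 0) + (if v ∈ S then (1:ℝ) else 0)
          - 2 * ((if u ∈ S then (1:ℝ) else 0) * (if v ∈ S then (1:ℝ) else 0)) := by
      intro u v
      by_cases hu : u ∈ S <;> by_cases hv : v ∈ S <;> simp [hu, hv] <;> norm_num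
    simp only [key]
    have hrow : ∀ u : V, ∑ v : V,
        ((if u ∈ S then (1:ℝ) else 0) + (if v ∈ S then (1:ℝ) else 0)
          - 2 * ((if u ∈ S then (1:ℝ) else 0) * (if v ∈ S then (1:ℝ) else 0)))
        = (Fintype.card V : ℝ) * (if u ∈ S then (1:ℝ) else 0) + (k:ℝ)
          - 2 * ((if u ∈ S then (1:ℝ) else 0) * (k:ℝ)) := by
      intro u
      rw [Finset.sum_sub_distrib, Finset.sum_add_distrib, Finset.sum_const,
        ← Finset.mul_sum, ← Finset.mul_sum, hxS]
      simp [Finset.card_univ, nsmul_eq_mul]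
    simp only [hrow]
    rw [Finset.sum_sub_distrib, Finset.sum_add_distrib, Finset.sum_const,
      ← Finset.mul_sum, ← Finset.mul_sum, ← Finset.sum_mul, hxS]
    simp only [Finset.card_univ, nsmul_eq_mul]
    ring
  -- AA : double sum over adjacent pairs of |x u - x v|
  have hAA : ∑ u : V, ∑ v ∈ G.neighborFinset u,
      |(if u ∈ S then (1:ℝ) else 0) - (if v ∈ S then (1:ℝ) else 0)|
      = 2 * (activeCount G S : ℝ) := by
    rw [← active_double G S]
    refine Finset.sum_congr rfl fun u _ => ?_
    rw [sum_neighbor_eq]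
    refine Finset.sum_congr rfl fun v _ => ?_
    by_cases ha : G.Adj u v <;> by_cases hu : u ∈ S <;> by_cases hv : v ∈ S <;>
      simp [activeGraph_adj, ha, hu, hv]
  -- the equation summed over adjacent pairs
  have hP1 : ∑ u : V, ∑ v ∈ G.neighborFinset u, ∑ w ∈ G.neighborFinset u, η w v = T := by
    have h1 : ∀ u : V, ∑ v ∈ G.neighborFinset u, ∑ w ∈ G.neighborFinset u, η w v
        = ∑ w ∈ G.neighborFinset u, ∑ v ∈ G.neighborFinset u, η w v :=
      fun u => Finset.sum_comm
    simp only [h1]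
    exact (triple_sum G η).symm
  have hP2 : ∑ u : V, ∑ v ∈ G.neighborFinset u, ∑ w ∈ G.neighborFinset v, η u w = T := by
    rw [neighbor_sum_swap G (fun u v => ∑ w ∈ G.neighborFinset v, η u w)]
    exact (triple_sum G η).symm
  have hE1 : E = ((Fintype.card V : ℝ)/2) * (2 * (activeCount G S : ℝ))
      + (1/(2*(d:ℝ))) * (T + T) := by
    calc E = ∑ u : V, ∑ v ∈ G.neighborFinset u, cfun G d S η u v := by
          rw [hE]
          refine Finset.sum_congr rfl fun u _ => Finset.sum_congr rfl fun v hv => ?_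
          exact hrecC u v (G.ne_of_adj ((SimpleGraph.mem_neighborFinset _ _ _).mp hv))
      _ = ((Fintype.card V : ℝ)/2) * (2 * (activeCount G S : ℝ))
          + (1/(2*(d:ℝ))) * (T + T) := by
          simp only [cfun, Finset.sum_add_distrib, ← Finset.mul_sum]
          rw [hAA, hP1, hP2]
  -- the equation summed over all pairs
  have hsplit : ∀ u v : V, η u v = cfun G d S η u v - (if u = v then cfun G d S η u v else 0) := by
    intro u v
    by_cases h : u = v
    · subst h
      rw [if_pos rfl, sub_self, hdiag u]
    · rw [if_neg h, sub_zero]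
      exact hrecC u v h
  have hdiagsum : ∀ u : V, ∑ v : V, (if u = v then cfun G d S η u v else 0)
      = cfun G d S η u u := by
    intro u
    rw [Finset.sum_ite_eq]
    simp
  have hR1 : ∑ u : V, ∑ v : V, ∑ w ∈ G.neighborFinset u, η w v = (d:ℝ) * Sg := by
    have h1 : ∀ u : V, ∑ v : V, ∑ w ∈ G.neighborFinset u, η w v
        = ∑ w ∈ G.neighborFinset u, ∑ v : V, η w v := fun u => Finset.sum_comm
    simp only [h1]
    rw [neighbor_sum_swap G (fun _ w => ∑ v : V, η w v)]
    have h2 : ∀ w : V, ∑ _u ∈ G.neighborFinset w, (∑ v : V, η w v)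
        = (d:ℝ) * ∑ v : V, η w v := by
      intro w
      rw [Finset.sum_const, hcard w, nsmul_eq_mul]
    simp only [h2]
    rw [← Finset.mul_sum, hSg]
  have hR2 : ∑ u : V, ∑ v : V, ∑ w ∈ G.neighborFinset v, η u w = (d:ℝ) * Sg := by
    have h1 : ∀ u : V, ∑ v : V, ∑ w ∈ G.neighborFinset v, η u w
        = (d:ℝ) * ∑ w : V, η u w := by
      intro u
      rw [neighbor_sum_swap G (fun v w => η u w)]
      have h2 : ∀ w : V, ∑ _v ∈ G.neighborFinset w, η u w = (d:ℝ) * η u w := by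
        intro w
        rw [Finset.sum_const, hcard w, nsmul_eq_mul]
      simp only [h2]
      rw [← Finset.mul_sum]
    simp only [h1]
    rw [← Finset.mul_sum, hSg]
  have hE' : ∑ u : V, ∑ w ∈ G.neighborFinset u, η w u = E := by
    rw [neighbor_sum_swap G (fun u w => η w u), hE]
  have hdiagC : ∑ u : V, cfun G d S η u u = (1/(2*(d:ℝ))) * (E + E) := by
    have h1 : ∀ u : V, cfun G d S η u u
        = (1/(2*(d:ℝ))) * ((∑ w ∈ G.neighborFinset u, η w u)
            + (∑ w ∈ G.neighborFinset u, η u w)) := by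
      intro u
      simp [cfun]
    simp only [h1]
    rw [← Finset.mul_sum, Finset.sum_add_distrib, hE', ← hE]
  have hSgEq : Sg = ((Fintype.card V : ℝ)/2) * (2 * (k:ℝ) * ((Fintype.card V : ℝ) - (k:ℝ)))
      + (1/(2*(d:ℝ))) * ((d:ℝ) * Sg + (d:ℝ) * Sg) - (1/(2*(d:ℝ))) * (E + E) := by
    calc Sg = ∑ u : V, ∑ v : V,
          (cfun G d S η u v - (if u = v then cfun G d S η u v else 0)) := by
            rw [hSg]
            exact Finset.sum_congr rfl fun u _ => Finset.sum_congr rfl fun v _ => hsplit u v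
      _ = (∑ u : V, ∑ v : V, cfun G d S η u v) - ∑ u : V, cfun G d S η u u := by
            rw [← Finset.sum_sub_distrib]
            refine Finset.sum_congr rfl fun u _ => ?_
            rw [Finset.sum_sub_distrib, hdiagsum u]
      _ = ((Fintype.card V : ℝ)/2) * (2 * (k:ℝ) * ((Fintype.card V : ℝ) - (k:ℝ)))
          + (1/(2*(d:ℝ))) * ((d:ℝ) * Sg + (d:ℝ) * Sg) - (1/(2*(d:ℝ))) * (E + E) := by
            rw [hdiagC]
            congr 1
            simp only [cfun, Finset.sum_add_distrib, ← Finset.mul_sum]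
            rw [hQ, hR1, hR2]
  -- solve for E and then T
  have h8 : (8:ℝ) * (d:ℝ) ≠ 0 := by
    simp [hd0]
  have hEval : E = (d:ℝ) * (Fintype.card V : ℝ) * (k:ℝ) * ((Fintype.card V : ℝ) - (k:ℝ)) := by
    field_simp at hSgEq
    have h2 : (8:ℝ) * (d:ℝ) * E
        = (8:ℝ) * (d:ℝ) *
          ((d:ℝ) * (Fintype.card V : ℝ) * (k:ℝ) * ((Fintype.card V : ℝ) - (k:ℝ))) := by
      linear_combination (4*(d:ℝ)) * hSgEq
    exact mul_left_cancel₀ h8 h2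
  have h2d : (2:ℝ) * (d:ℝ) ≠ 0 := by
    simp [hd0]
  have hTval : T = (d:ℝ) * E - (d:ℝ) * (Fintype.card V : ℝ) * (activeCount G S : ℝ) := by
    field_simp at hE1
    have h2 : (2:ℝ) * (d:ℝ) * T
        = (2:ℝ) * (d:ℝ) *
          ((d:ℝ) * E - (d:ℝ) * (Fintype.card V : ℝ) * (activeCount G S : ℝ)) := by
      linear_combination (-(d:ℝ)) * hE1
    exact mul_left_cancel₀ h2d h2
  rw [hTval, hEval]
  ring
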